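/- Let σ be a positive semidefinite operator on a finite-dimensional complex Hilbert space, let α ∈ (1,∞) with conjugate index α' = α/(α−1), and let X, Y be positive semidefinite operators. Then ⟨X, Y⟩_σ ≤ ‖X‖_{α,σ} · ‖Y‖_{α',σ}. -/

import Mathlib

open Matrix
open scoped ComplexOrder Kronecker

noncomputable section

/-- Real power of a Hermitian matrix via functional calculus on its support
(Moore–Penrose convention, also for negative powers); junk value `0` for
non-Hermitian input. -/
def Matrix.rpowH {ι : Type*} [Fintype ι] [DecidableEq ι] (A : Matrix ι ι ℂ) (p : ℝ) :
    Matrix ι ι ℂ :=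
  if hA : A.IsHermitian then
    (hA.eigenvectorUnitary : Matrix ι ι ℂ) *
      Matrix.diagonal (fun i => ((hA.eigenvalues i ^ p : ℝ) : ℂ)) *
      star (hA.eigenvectorUnitary : Matrix ι ι ℂ)
  else 0

/-- The operator absolute value `|A| = (A† A)^(1/2)`. -/
def Matrix.absM {ι : Type*} [Fintype ι] [DecidableEq ι] (A : Matrix ι ι ℂ) :
    Matrix ι ι ℂ :=
  Matrix.rpowH (Aᴴ * A) (2⁻¹ : ℝ)

/-- Real part of the trace. -/
def retr {ι : Type*} [Fintype ι] (A : Matrix ι ι ℂ) : ℝ :=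
  (Matrix.trace A).re

/-- The σ-weighted `p`-(quasi)norm `‖X‖_{p,σ} = (Tr[|σ^{1/(2p)} X σ^{1/(2p)}|^p])^{1/p}`. -/
def wNorm {ι : Type*} [Fintype ι] [DecidableEq ι]
    (p : ℝ) (σ X : Matrix ι ι ℂ) : ℝ :=
  (retr (Matrix.rpowH
    (Matrix.absM (Matrix.rpowH σ (1 / (2 * p)) * X * Matrix.rpowH σ (1 / (2 * p)))) p))
    ^ (1 / p)

/-- The Kubo–Martin–Schwinger σ-weighted inner product
`⟨X, Y⟩_σ = Tr[X† σ^{1/2} Y σ^{1/2}]` (its real part; it is real for the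
operators considered here). -/
def kmsInner {ι : Type*} [Fintype ι] [DecidableEq ι]
    (σ X Y : Matrix ι ι ℂ) : ℝ :=
  retr (Xᴴ * Matrix.rpowH σ (2⁻¹ : ℝ) * Y * Matrix.rpowH σ (2⁻¹ : ℝ))


section Helpers

set_option linter.unusedSectionVars false

variable {ι : Type*} [Fintype ι] [DecidableEq ι]

lemma rpowH_of_hermitian {A : Matrix ι ι ℂ} (hA : A.IsHermitian) (p : ℝ) :
    A.rpowH p = (hA.eigenvectorUnitary : Matrix ι ι ℂ) *
      Matrix.diagonal (fun i => ((hA.eigenvalues i ^ p : ℝ) : ℂ)) *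
      star (hA.eigenvectorUnitary : Matrix ι ι ℂ) := dif_pos hA

lemma rpowH_posSemidef {σ : Matrix ι ι ℂ} (hσ : σ.PosSemidef) (p : ℝ) :
    (σ.rpowH p).PosSemidef := by
  rw [rpowH_of_hermitian hσ.1, star_eq_conjTranspose]
  refine (posSemidef_diagonal_iff.mpr fun i => ?_).mul_mul_conjTranspose_same _
  rw [Complex.le_def]
  simp [Real.rpow_nonneg (hσ.eigenvalues_nonneg i)]

lemma rpowH_mul_rpowH {σ : Matrix ι ι ℂ} (hσ : σ.PosSemidef) {a b : ℝ} (hab : a + b ≠ 0) :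
    σ.rpowH a * σ.rpowH b = σ.rpowH (a + b) := by
  rw [rpowH_of_hermitian hσ.1, rpowH_of_hermitian hσ.1, rpowH_of_hermitian hσ.1]
  set U := (hσ.1.eigenvectorUnitary : Matrix ι ι ℂ)
  have hU : star U * U = 1 := Unitary.coe_star_mul_self _
  have : ∀ p q : Matrix ι ι ℂ, (U * p * star U) * (U * q * star U) = U * (p * q) * star U := by
    intro p q
    calc (U * p * star U) * (U * q * star U) = U * (p * ((star U * U) * (q * star U))) := by
          simp only [mul_assoc]
      _ = U * (p * q) * star U := by rw [hU]; simp only [one_mul, mul_assoc]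
  rw [this, diagonal_mul_diagonal]
  have hfun : (fun i => ((hσ.1.eigenvalues i ^ a : ℝ) : ℂ) * ((hσ.1.eigenvalues i ^ b : ℝ) : ℂ))
      = (fun i => ((hσ.1.eigenvalues i ^ (a + b) : ℝ) : ℂ)) := by
    funext i
    rw [← Complex.ofReal_mul, Real.rpow_add' (hσ.eigenvalues_nonneg i) hab]
  rw [hfun]

lemma rpowH_half {A : Matrix ι ι ℂ} (hA : A.PosSemidef) : A.rpowH (2⁻¹ : ℝ) = cfc Real.sqrt A := by
  have hfun : (fun i => ((hA.1.eigenvalues i ^ (2⁻¹ : ℝ) : ℝ) : ℂ))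
      = (RCLike.ofReal ∘ Real.sqrt ∘ hA.1.eigenvalues : ι → ℂ) := by
    funext i
    simp [Function.comp, RCLike.ofReal, Real.sqrt_eq_rpow, one_div]
  rw [rpowH_of_hermitian hA.1, hA.1.cfc_eq, IsHermitian.cfc, Unitary.conjStarAlgAut_apply, hfun]

lemma absM_of_posSemidef {A : Matrix ι ι ℂ} (hA : A.PosSemidef) : A.absM = A := by
  have h2 : Aᴴ * A = A ^ 2 := by rw [hA.1, pow_two]
  rw [Matrix.absM, h2, rpowH_half (hA.pow 2), ← cfc_comp_pow Real.sqrt 2 A (ha := hA.1.isSelfAdjoint),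
    hA.1.cfc_eq, IsHermitian.cfc]
  have hf : (RCLike.ofReal ∘ (fun x : ℝ => Real.sqrt (x ^ 2)) ∘ hA.1.eigenvalues : ι → ℂ)
      = RCLike.ofReal ∘ hA.1.eigenvalues := by
    funext i
    simp [Real.sqrt_sq (hA.eigenvalues_nonneg i)]
  rw [hf, ← hA.1.spectral_theorem]

lemma retr_rpowH {A : Matrix ι ι ℂ} (hA : A.IsHermitian) (p : ℝ) :
    retr (A.rpowH p) = ∑ i, hA.eigenvalues i ^ p := by
  rw [rpowH_of_hermitian hA, retr, Matrix.trace_mul_cycle,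
    Unitary.coe_star_mul_self, one_mul, Matrix.trace_diagonal, Complex.re_sum]
  simp

lemma hterm (r s : ℝ) (z : ℂ) :
    (RCLike.ofReal r : ℂ) * z * (RCLike.ofReal s : ℂ) * star z
      = ((r * s * Complex.normSq z : ℝ) : ℂ) := by
  show (r : ℂ) * z * (s : ℂ) * star z = ((r * s * Complex.normSq z : ℝ) : ℂ)
  rw [RCLike.star_def]
  push_cast
  rw [← Complex.mul_conj]
  ring

lemma retr_mul_posSemidef {M N : Matrix ι ι ℂ} (hM : M.PosSemidef) (hN : N.PosSemidef) :
    retr (M * N) = ∑ i, ∑ j, hM.1.eigenvalues i * hN.1.eigenvalues j *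
      Complex.normSq ((star (hM.1.eigenvectorUnitary : Matrix ι ι ℂ) *
        (hN.1.eigenvectorUnitary : Matrix ι ι ℂ)) i j) := by
  set U := (hM.1.eigenvectorUnitary : Matrix ι ι ℂ) with hU
  set V := (hN.1.eigenvectorUnitary : Matrix ι ι ℂ) with hV
  set W := star U * V with hW
  set d := hM.1.eigenvalues with hd
  set e := hN.1.eigenvalues with he
  set D := Matrix.diagonal (RCLike.ofReal ∘ d : ι → ℂ) with hD
  set E := Matrix.diagonal (RCLike.ofReal ∘ e : ι → ℂ) with hE
  have h1 : M * N = U * (D * (star U * (V * (E * star V)))) := by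
    conv_lhs => rw [hM.1.spectral_theorem, hN.1.spectral_theorem]
    simp only [Unitary.conjStarAlgAut_apply, mul_assoc]
    rfl
  have h2 : (D * (star U * (V * (E * star V)))) * U = D * W * E * star W := by
    rw [hW, Matrix.star_mul, star_star]
    simp only [mul_assoc]
  have entry : ∀ i j : ι, (D * W * E * star W) i j
      = ∑ k, ((RCLike.ofReal (d i) : ℂ) * W i k * (RCLike.ofReal (e k) : ℂ) * star (W j k)) := by
    intro i j
    rw [Matrix.mul_apply]
    refine Finset.sum_congr rfl fun k _ => ?_
    simp only [hD, hE, Matrix.mul_diagonal, Matrix.diagonal_mul, Matrix.star_apply,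
      Function.comp_apply]
  have htr : Matrix.trace (D * W * E * star W)
      = ((∑ i, ∑ k, d i * e k * Complex.normSq (W i k) : ℝ) : ℂ) := by
    have hdiag : ∀ i, (D * W * E * star W).diag i
        = ((∑ k, d i * e k * Complex.normSq (W i k) : ℝ) : ℂ) := by
      intro i
      rw [Matrix.diag_apply, entry i i]
      push_cast
      exact Finset.sum_congr rfl fun k _ => by
        simpa using hterm (d i) (e k) (W i k)
    rw [Matrix.trace, Finset.sum_congr rfl (fun i _ => hdiag i)]
    push_cast
    rfl
  rw [retr, h1, Matrix.trace_mul_comm, h2, htr, Complex.ofReal_re]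

lemma sum_normSq_row {W : Matrix ι ι ℂ} (h : W * star W = 1) (i : ι) :
    ∑ j, Complex.normSq (W i j) = 1 := by
  have h0 := congrFun (congrFun h i) i
  rw [Matrix.mul_apply, Matrix.one_apply_eq] at h0
  have : ((∑ j, Complex.normSq (W i j) : ℝ) : ℂ) = 1 := by
    rw [← h0]
    push_cast
    refine Finset.sum_congr rfl fun j _ => ?_
    rw [Matrix.star_apply, RCLike.star_def, Complex.mul_conj]
  exact_mod_cast this

lemma sum_normSq_col {W : Matrix ι ι ℂ} (h : star W * W = 1) (j : ι) :
    ∑ i, Complex.normSq (W i j) = 1 := by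
  have h0 := congrFun (congrFun h j) j
  rw [Matrix.mul_apply, Matrix.one_apply_eq] at h0
  have : ((∑ i, Complex.normSq (W i j) : ℝ) : ℂ) = 1 := by
    rw [← h0]
    push_cast
    refine Finset.sum_congr rfl fun i _ => ?_
    rw [Matrix.star_apply, RCLike.star_def, mul_comm, Complex.mul_conj]
  exact_mod_cast this

lemma core_holder {d e : ι → ℝ} {c : ι → ι → ℝ} (hd : ∀ i, 0 ≤ d i) (he : ∀ j, 0 ≤ e j)
    (hc : ∀ i j, 0 ≤ c i j) (hrow : ∀ i, ∑ j, c i j = 1) (hcol : ∀ j, ∑ i, c i j = 1)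
    {α α' : ℝ} (hpq : α.HolderConjugate α') :
    ∑ i, ∑ j, d i * e j * c i j
      ≤ (∑ i, d i ^ α) ^ (1/α) * (∑ j, e j ^ α') ^ (1/α') := by
  have hsum1 : 1/α + 1/α' = 1 := by
    simpa [one_div] using hpq.inv_add_inv_eq_one
  have key := Real.inner_le_Lp_mul_Lq_of_nonneg (s := (Finset.univ : Finset (ι × ι))) hpq
      (f := fun p => c p.1 p.2 ^ (1/α) * d p.1) (g := fun p => c p.1 p.2 ^ (1/α') * e p.2)
      (fun p _ => mul_nonneg (Real.rpow_nonneg (hc _ _) _) (hd _))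
      (fun p _ => mul_nonneg (Real.rpow_nonneg (hc _ _) _) (he _))
  have hL : ∑ p : ι × ι, (c p.1 p.2 ^ (1/α) * d p.1) * (c p.1 p.2 ^ (1/α') * e p.2)
      = ∑ i, ∑ j, d i * e j * c i j := by
    rw [Fintype.sum_prod_type]
    refine Finset.sum_congr rfl fun i _ => Finset.sum_congr rfl fun j _ => ?_
    have hcc : c i j ^ (1/α) * c i j ^ (1/α') = c i j := by
      rw [← Real.rpow_add' (hc i j) (by rw [hsum1]; norm_num), hsum1, Real.rpow_one]
    calc (c i j ^ (1/α) * d i) * (c i j ^ (1/α') * e j)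
        = (c i j ^ (1/α) * c i j ^ (1/α')) * (d i * e j) := by ring
      _ = d i * e j * c i j := by rw [hcc]; ring
  have hpow1 : ∀ i j, (c i j ^ (1/α) * d i) ^ α = c i j * d i ^ α := by
    intro i j
    rw [Real.mul_rpow (Real.rpow_nonneg (hc i j) _) (hd i), ← Real.rpow_mul (hc i j),
      one_div, inv_mul_cancel₀ hpq.ne_zero, Real.rpow_one]
  have hpow2 : ∀ i j, (c i j ^ (1/α') * e j) ^ α' = c i j * e j ^ α' := by
    intro i j
    rw [Real.mul_rpow (Real.rpow_nonneg (hc i j) _) (he j), ← Real.rpow_mul (hc i j),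
      one_div, inv_mul_cancel₀ hpq.symm.ne_zero, Real.rpow_one]
  have hR1 : ∑ p : ι × ι, (c p.1 p.2 ^ (1/α) * d p.1) ^ α = ∑ i, d i ^ α := by
    rw [Fintype.sum_prod_type]
    refine Finset.sum_congr rfl fun i _ => ?_
    rw [Finset.sum_congr rfl fun j _ => hpow1 i j, ← Finset.sum_mul, hrow i, one_mul]
  have hR2 : ∑ p : ι × ι, (c p.1 p.2 ^ (1/α') * e p.2) ^ α' = ∑ j, e j ^ α' := by
    rw [Fintype.sum_prod_type, Finset.sum_comm]
    refine Finset.sum_congr rfl fun j _ => ?_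
    rw [Finset.sum_congr rfl fun i _ => hpow2 i j, ← Finset.sum_mul, hcol j, one_mul]
  rw [hL, hR1, hR2] at key
  exact key


end Helpers

/-- weighted Hölder inequality, `α > 1`.
For a positive semidefinite `σ`, `α ∈ (1,∞)` with conjugate index `α' = α/(α-1)`,
and positive semidefinite `X, Y`: `⟨X, Y⟩_σ ≤ ‖X‖_{α,σ} ‖Y‖_{α',σ}`. -/
theorem weighted_holder
    {ι : Type*} [Fintype ι] [DecidableEq ι]
    (σ X Y : Matrix ι ι ℂ)
    (hσ : σ.PosSemidef) (hX : X.PosSemidef) (hY : Y.PosSemidef)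
    (α : ℝ) (hα : 1 < α) (α' : ℝ) (hα' : α' = α / (α - 1)) :
    kmsInner σ X Y ≤ wNorm α σ X * wNorm α' σ Y := by
  have hpq : α.HolderConjugate α' := (Real.holderConjugate_iff_eq_conjExponent hα).2 hα'
  set c1 : ℝ := 1 / (2 * α) with hc1
  set c2 : ℝ := 1 / (2 * α') with hc2
  have h12 : c1 + c2 = 2⁻¹ := by
    calc c1 + c2 = 2⁻¹ * (α⁻¹ + α'⁻¹) := by
          rw [hc1, hc2, one_div, one_div, mul_inv, mul_inv]; ring
      _ = 2⁻¹ := by rw [hpq.inv_add_inv_eq_one, mul_one]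
  have h12ne : c1 + c2 ≠ 0 := by rw [h12]; norm_num
  have h21ne : c2 + c1 ≠ 0 := by rw [add_comm]; exact h12ne
  set A := Matrix.rpowH σ c1 with hA
  set B := Matrix.rpowH σ c2 with hB
  have hApsd := rpowH_posSemidef hσ c1
  have hBpsd := rpowH_posSemidef hσ c2
  set M := A * X * A with hM
  set N := B * Y * B with hN
  have hMpsd : M.PosSemidef := by
    have h := hX.mul_mul_conjTranspose_same A
    rwa [hApsd.1.eq] at h
  have hNpsd : N.PosSemidef := by
    have h := hY.mul_mul_conjTranspose_same B
    rwa [hBpsd.1.eq] at h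
  have hhalf : Matrix.rpowH σ (2⁻¹ : ℝ) = A * B := by
    rw [hA, hB, rpowH_mul_rpowH hσ h12ne, h12]
  have hhalf' : Matrix.rpowH σ (2⁻¹ : ℝ) = B * A := by
    rw [hA, hB, rpowH_mul_rpowH hσ h21ne, add_comm c2 c1, h12]
  have hkms : kmsInner σ X Y = retr (M * N) := by
    rw [kmsInner]
    have hmat : Xᴴ * Matrix.rpowH σ (2⁻¹ : ℝ) * Y * Matrix.rpowH σ (2⁻¹ : ℝ)
        = X * (A * B) * Y * (B * A) := by
      nth_rewrite 2 [hhalf']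
      rw [hhalf, hX.1.eq]
    rw [hmat, retr]
    have e1 : X * (A * B) * Y * (B * A) = (X * (A * B) * Y * B) * A := by
      simp only [mul_assoc]
    have e2 : A * (X * (A * B) * Y * B) = M * N := by
      rw [hM, hN]; simp only [mul_assoc]
    rw [e1, Matrix.trace_mul_comm, e2, retr]
  have hWx : wNorm α σ X = (∑ i, hMpsd.1.eigenvalues i ^ α) ^ (1/α) := by
    rw [wNorm, ← hc1, ← hA, ← hM, absM_of_posSemidef hMpsd, retr_rpowH hMpsd.1]
  have hWy : wNorm α' σ Y = (∑ j, hNpsd.1.eigenvalues j ^ α') ^ (1/α') := by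
    rw [wNorm, ← hc2, ← hB, ← hN, absM_of_posSemidef hNpsd, retr_rpowH hNpsd.1]
  rw [hkms, hWx, hWy, retr_mul_posSemidef hMpsd hNpsd]
  set W := star (hMpsd.1.eigenvectorUnitary : Matrix ι ι ℂ) *
    (hNpsd.1.eigenvectorUnitary : Matrix ι ι ℂ) with hWdef
  have hWu : W ∈ Matrix.unitaryGroup ι ℂ := by
    exact (star hMpsd.1.eigenvectorUnitary * hNpsd.1.eigenvectorUnitary).prop
  exact core_holder (fun i => hMpsd.eigenvalues_nonneg i) (fun j => hNpsd.eigenvalues_nonneg j)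
    (fun i j => Complex.normSq_nonneg _)
    (sum_normSq_row (Matrix.mem_unitaryGroup_iff.mp hWu))
    (sum_normSq_col (Matrix.mem_unitaryGroup_iff'.mp hWu)) hpq

end
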